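/- Let B be an invertible symmetric s × s matrix over ℚ and let e ∈ ℚ^s be the last standard basis vector. Define the (s+1) × (s+1) symmetric matrix B′ in block form by B′ = [[B − e eᵀ, e], [eᵀ, −1]]. Then det B′ = −det B (in particular B′ is invertible), and for all m, n ∈ ℚ^s and all m₀, n₀ ∈ ℚ, one has ⟨(m − m₀e, m₀), B′^{−1}(n − n₀e, n₀)⟩ = ⟨m, B^{−1}n⟩ − m₀n₀, where ⟨·,·⟩ denotes the standard bilinear form. -/

import Mathlib

open Matrix

private lemma blowup_right_inv (s : ℕ) (B : Matrix (Fin s) (Fin s) ℚ) (hB : B.det ≠ 0)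
    (e : Fin s → ℚ) :
    (Matrix.fromBlocks (B - Matrix.vecMulVec e e)
            (Matrix.of fun i (_ : Fin 1) => e i) (Matrix.of fun (_ : Fin 1) j => e j)
            (Matrix.of fun _ _ => (-1 : ℚ))) *
    (Matrix.fromBlocks B⁻¹ (Matrix.of fun i (_ : Fin 1) => (B⁻¹ *ᵥ e) i)
            (Matrix.of fun (_ : Fin 1) j => (e ᵥ* B⁻¹) j)
            (Matrix.of fun _ _ => e ⬝ᵥ (B⁻¹ *ᵥ e) - 1)) = 1 := by
  have h1 : B * B⁻¹ = 1 := Matrix.mul_nonsing_inv B (isUnit_iff_ne_zero.mpr hB)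
  rw [Matrix.fromBlocks_multiply, ← Matrix.fromBlocks_one]
  ext i j
  cases i with
  | inl i => cases j with
    | inl j =>
      simp only [Matrix.fromBlocks_apply₁₁, Matrix.mul_apply, Matrix.add_apply,
        Matrix.sub_apply, Matrix.of_apply, Matrix.vecMulVec_apply, Matrix.vecMul,
        dotProduct, Finset.sum_sub_distrib, sub_mul, Finset.mul_sum,
        Finset.sum_mul, mul_assoc, Finset.univ_unique, Finset.sum_singleton]
      rw [sub_add_cancel]
      have := congrFun (congrFun h1 i) j
      simpa [Matrix.mul_apply] using this
    | inr j =>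
      simp only [Matrix.fromBlocks_apply₁₂, Matrix.mul_apply, Matrix.add_apply,
        Matrix.sub_apply, Matrix.of_apply, Matrix.vecMulVec_apply, Matrix.mulVec,
        dotProduct, Finset.sum_sub_distrib, sub_mul, mul_sub, Finset.mul_sum,
        Finset.sum_mul, mul_assoc, Finset.univ_unique, Finset.sum_singleton,
        Matrix.zero_apply]
      rw [sub_add_sub_cancel]
      have h2 : (B * B⁻¹) *ᵥ e = e := by rw [h1, Matrix.one_mulVec]
      have := congrFun h2 i
      simp only [Matrix.mulVec, Matrix.mul_apply, dotProduct, Finset.sum_mul,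
        mul_assoc] at this
      rw [Finset.sum_comm] at this
      simp [this]
  | inr i => cases j with
    | inl j =>
      simp [Matrix.mul_apply, Matrix.vecMul, dotProduct]
    | inr j =>
      simp only [Matrix.fromBlocks_apply₂₂, Matrix.mul_apply, Matrix.add_apply,
        Matrix.of_apply, Matrix.one_apply, dotProduct, Matrix.mulVec,
        Finset.univ_unique, Finset.sum_singleton, neg_mul, one_mul,
        eq_iff_true_of_subsingleton, if_true]
      ring

theorem blow_up_move_bilinear_identity (s : ℕ) (hs : 1 ≤ s)
    (B : Matrix (Fin s) (Fin s) ℚ) (hsymm : B.IsSymm) (hB : B.det ≠ 0) :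
    ∀ (e : Fin s → ℚ), e = Pi.single (⟨s - 1, by omega⟩ : Fin s) 1 →
    ∀ (B' : Matrix (Fin s ⊕ Fin 1) (Fin s ⊕ Fin 1) ℚ),
      B' = Matrix.fromBlocks (B - Matrix.vecMulVec e e)
            (Matrix.of fun i _ => e i) (Matrix.of fun _ j => e j)
            (Matrix.of fun _ _ => (-1 : ℚ)) →
      B'.det = -B.det ∧
      ∀ (m n : Fin s → ℚ) (m₀ n₀ : ℚ),
        (Sum.elim (m - m₀ • e) (fun _ => m₀)) ⬝ᵥ
            B'⁻¹.mulVec (Sum.elim (n - n₀ • e) (fun _ => n₀)) =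
          m ⬝ᵥ B⁻¹.mulVec n - m₀ * n₀ := by
  intro e he B' hB'
  have hX : B' * (Matrix.fromBlocks B⁻¹ (Matrix.of fun i (_ : Fin 1) => (B⁻¹ *ᵥ e) i)
            (Matrix.of fun (_ : Fin 1) j => (e ᵥ* B⁻¹) j)
            (Matrix.of fun _ _ => e ⬝ᵥ (B⁻¹ *ᵥ e) - 1)) = 1 := by
    rw [hB']; exact blowup_right_inv s B hB e
  have hBinv : B'⁻¹ = Matrix.fromBlocks B⁻¹ (Matrix.of fun i (_ : Fin 1) => (B⁻¹ *ᵥ e) i)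
            (Matrix.of fun (_ : Fin 1) j => (e ᵥ* B⁻¹) j)
            (Matrix.of fun _ _ => e ⬝ᵥ (B⁻¹ *ᵥ e) - 1) :=
    Matrix.inv_eq_right_inv hX
  constructor
  · -- determinant
    letI : Invertible (Matrix.of fun _ _ => (-1 : ℚ) : Matrix (Fin 1) (Fin 1) ℚ) :=
      ⟨Matrix.of fun _ _ => (-1 : ℚ),
        by ext i j; simp [Matrix.mul_apply, Matrix.one_apply, eq_iff_true_of_subsingleton],
        by ext i j; simp [Matrix.mul_apply, Matrix.one_apply, eq_iff_true_of_subsingleton]⟩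
    rw [hB', Matrix.det_fromBlocks₂₂]
    have hD : (Matrix.of fun _ _ => (-1 : ℚ) : Matrix (Fin 1) (Fin 1) ℚ).det = -1 := by
      simp [Matrix.det_fin_one]
    have hinvOf : (⅟(Matrix.of fun _ _ => (-1 : ℚ) : Matrix (Fin 1) (Fin 1) ℚ))
        = Matrix.of fun _ _ => (-1 : ℚ) := rfl
    rw [hD, hinvOf]
    have : (B - Matrix.vecMulVec e e) -
        (Matrix.of fun i (_ : Fin 1) => e i : Matrix (Fin s) (Fin 1) ℚ) * (Matrix.of fun _ _ => (-1 : ℚ) : Matrix (Fin 1) (Fin 1) ℚ) *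
          (Matrix.of fun (_ : Fin 1) j => e j) = B := by
      ext i j
      simp [Matrix.mul_apply, Matrix.vecMulVec_apply, Matrix.sub_apply]
    rw [this]
    ring
  · -- bilinear identity
    intro m n m₀ n₀
    rw [hBinv, Matrix.fromBlocks_mulVec, sumElim_dotProduct_sumElim]
    simp only [Sum.elim_comp_inl, Sum.elim_comp_inr]
    have hcol : (Matrix.of fun i (_ : Fin 1) => (B⁻¹ *ᵥ e) i) *ᵥ (fun _ => n₀)
        = n₀ • (B⁻¹ *ᵥ e) := by
      ext i; simp [Matrix.mulVec, dotProduct, mul_comm]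
    have hrow : (Matrix.of fun (_ : Fin 1) j => (e ᵥ* B⁻¹) j) *ᵥ (n - n₀ • e)
        = fun _ => (e ᵥ* B⁻¹) ⬝ᵥ (n - n₀ • e) := by
      ext i; simp [Matrix.mulVec]
    have hD : (Matrix.of fun _ _ => e ⬝ᵥ (B⁻¹ *ᵥ e) - 1 : Matrix (Fin 1) (Fin 1) ℚ)
        *ᵥ (fun _ => n₀) = fun _ => (e ⬝ᵥ (B⁻¹ *ᵥ e) - 1) * n₀ := by
      ext i; simp [Matrix.mulVec, dotProduct]
    rw [hcol, hrow, hD]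
    have hfin : ∀ f : Fin 1 → ℚ, (fun (_ : Fin 1) => m₀) ⬝ᵥ f = m₀ * f 0 := by
      intro f; simp [dotProduct]
    simp only [dotProduct_add, hfin, Pi.add_apply, Matrix.mulVec_sub,
      Matrix.mulVec_smul, dotProduct_sub, sub_dotProduct,
      smul_dotProduct, dotProduct_smul, smul_eq_mul,
      ← Matrix.dotProduct_mulVec]
    ring
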